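/- Let $h > 0$, let $a : (-\infty, t_{\max}) \to \mathbb{R}_{>0}$ be continuous with $(a(t) - e^{ht})/e^{ht} \to 0$ as $t \to -\infty$, and fix $t_\mathrm{L} \in (-\infty, t_{\max})$. Define conformal time $\eta(t) = -\int_t^{t_\mathrm{L}} \frac{d\tilde t}{a(\tilde t)}$. Then $a(t)\eta(t) \to -1/h$ as $t \to -\infty$. -/

import Mathlib

open Real Filter intervalIntegral

lemma exp_neg_integral_aux (h : ℝ) (hne : h ≠ 0) (u v : ℝ) :
    ∫ s in u..v, Real.exp (-(h*s)) = (Real.exp (-(h*u)) - Real.exp (-(h*v)))/h := by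
  have hd : ∀ x : ℝ, HasDerivAt (fun s => -(Real.exp (-(h*s))/h)) (Real.exp (-(h*x))) x := by
    intro x
    have h1 : HasDerivAt (fun s : ℝ => -(h*s)) (-h) x := by
      simpa using ((hasDerivAt_id x).const_mul (-h)).congr_deriv (by ring)
    have h2 := (h1.exp.div_const h).neg
    exact h2.congr_deriv (by rw [mul_neg, neg_div, neg_neg, mul_div_assoc, div_self hne, mul_one])
  rw [intervalIntegral.integral_eq_sub_of_hasDerivAt (fun x _ => hd x)
    ((Real.continuous_exp.comp ((continuous_const.mul continuous_id).neg : Continuous fun s : ℝ => -(h*s))).intervalIntegrable u v)]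
  ring

/-- If `a(t) = e^{ht} + o(e^{ht})` as `t → -∞`, then the scale factor times the
conformal time `η(t) = -∫_t^{tL} ds/a(s)` satisfies `a·η → -1/h`. -/
theorem a_eta_limit_of_asymptotic_form
    (a : ℝ → ℝ) (tmax h tL : ℝ) (hh : 0 < h) (htL : tL < tmax)
    (ha_cont : ContinuousOn a (Set.Iio tmax))
    (ha_pos : ∀ t ∈ Set.Iio tmax, 0 < a t)
    (ha_asym : Tendsto (fun t => (a t - Real.exp (h * t)) / Real.exp (h * t))
      atBot (nhds 0))
    (η : ℝ → ℝ) (hη : η = fun t => -(∫ s in t..tL, 1 / a s)) :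
    Tendsto (fun t => a t * η t) atBot (nhds (-(1 / h))) := by
  subst hη
  -- integrability of 1/a on subintervals of Iio tmax
  have hinv_cont : ContinuousOn (fun s => 1 / a s) (Set.Iio tmax) :=
    continuousOn_const.div ha_cont (fun t ht => (ha_pos t ht).ne')
  have h_int : ∀ u v : ℝ, u < tmax → v < tmax →
      IntervalIntegrable (fun s => 1 / a s) MeasureTheory.volume u v := by
    intro u v hu hv
    apply ContinuousOn.intervalIntegrable
    apply hinv_cont.mono
    intro x hx
    rw [Set.uIcc_eq_union] at hx
    rcases hx with hx | hx
    · exact lt_of_le_of_lt hx.2 hv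
    · exact lt_of_le_of_lt hx.2 hu
  -- Key limit: e^{ht} · ∫_t^{tL} ds/a(s) → 1/h
  have key : Tendsto (fun t => Real.exp (h*t) * ∫ s in t..tL, 1 / a s)
      atBot (nhds (1/h)) := by
    rw [Metric.tendsto_nhds]
    intro δ hδ
    set ε : ℝ := min (1/2) (h*δ/4) with hεdef
    have hε0 : 0 < ε := lt_min (by norm_num) (by positivity)
    have hεhalf : ε ≤ 1/2 := min_le_left _ _
    have hεδ : ε ≤ h*δ/4 := min_le_right _ _
    obtain ⟨T0, hT0⟩ := eventually_atBot.mp ((Metric.tendsto_nhds.mp ha_asym) ε hε0)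
    set T : ℝ := min T0 tL with hTdef
    have hTmax : T < tmax := lt_of_le_of_lt (min_le_right _ _) htL
    have hTtL : T ≤ tL := min_le_right _ _
    -- basic bound for s ≤ T
    have hbound : ∀ s, s ≤ T → |a s - Real.exp (h*s)| ≤ ε * Real.exp (h*s) := by
      intro s hs
      have h1 := hT0 s (hs.trans (min_le_left _ _))
      rw [Real.dist_eq, sub_zero, abs_div, abs_of_pos (Real.exp_pos _)] at h1
      exact ((div_lt_iff₀ (Real.exp_pos _)).mp h1).le
    have hlow : ∀ s, s ≤ T → (1/2) * Real.exp (h*s) ≤ a s := by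
      intro s hs
      have h1 := (abs_le.mp (hbound s hs)).1
      have h2 : ε * Real.exp (h*s) ≤ (1/2) * Real.exp (h*s) :=
        mul_le_mul_of_nonneg_right hεhalf (Real.exp_pos _).le
      nlinarith [Real.exp_pos (h*s)]
    -- pointwise bound on 1/a − e^{−hs}
    have hpt : ∀ s, s ≤ T → |1 / a s - Real.exp (-(h*s))| ≤ 2*ε * Real.exp (-(h*s)) := by
      intro s hs
      have hsmax : s < tmax := lt_of_le_of_lt hs hTmax
      have has : 0 < a s := ha_pos s hsmax
      have heq : 1 / a s - Real.exp (-(h*s)) =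
          (Real.exp (h*s) - a s) / (a s * Real.exp (h*s)) := by
        rw [Real.exp_neg]
        field_simp
      have h3 : Real.exp (-(h*s)) * Real.exp (h*s) = 1 := by
        rw [← Real.exp_add]; simp
      rw [heq, abs_div, abs_of_pos (mul_pos has (Real.exp_pos _)), div_le_iff₀
        (mul_pos has (Real.exp_pos _))]
      calc |Real.exp (h*s) - a s| ≤ ε * Real.exp (h*s) := by
            rw [abs_sub_comm]; exact hbound s hs
        _ = 2*ε*Real.exp (-(h*s)) * ((1/2) * Real.exp (h*s) * Real.exp (h*s)) := by
            rw [show (2:ℝ)*ε*Real.exp (-(h*s)) * ((1/2) * Real.exp (h*s) * Real.exp (h*s))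
              = ε * (Real.exp (-(h*s)) * Real.exp (h*s)) * Real.exp (h*s) by ring, h3]
            ring
        _ ≤ 2*ε*Real.exp (-(h*s)) * (a s * Real.exp (h*s)) :=
            mul_le_mul_of_nonneg_left
              (mul_le_mul_of_nonneg_right (hlow s hs) (Real.exp_pos _).le)
              (by positivity)
    -- the tail constant
    set C : ℝ := ∫ s in T..tL, 1 / a s with hCdef
    set K : ℝ := Real.exp (-(h*T))/h + |C| with hKdef
    have hK0 : 0 ≤ K := by positivity
    -- eventually exp(h t) * K < δ/2
    have hexp0 : Tendsto (fun t => Real.exp (h*t) * K) atBot (nhds 0) := by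
      have h1 : Tendsto (fun t : ℝ => h*t) atBot atBot :=
        (tendsto_id.const_mul_atBot hh)
      have h2 := (Real.tendsto_exp_atBot.comp h1).mul_const K
      simpa using h2
    have hev2 : ∀ᶠ t in atBot, Real.exp (h*t) * K < δ/2 := by
      have := (Metric.tendsto_nhds.mp hexp0) (δ/2) (by positivity)
      filter_upwards [this] with t ht
      rw [Real.dist_eq, sub_zero] at ht
      calc Real.exp (h*t) * K ≤ |Real.exp (h*t) * K| := le_abs_self _
        _ < δ/2 := ht
    filter_upwards [eventually_le_atBot T, hev2] with t htT hev2t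
    -- split the integral
    have hsplit : ∫ s in t..tL, 1 / a s = (∫ s in t..T, 1 / a s) + C :=
      (integral_add_adjacent_intervals (h_int t T (lt_of_le_of_lt htT hTmax) hTmax)
        (h_int T tL hTmax htL)).symm
    set I1 : ℝ := ∫ s in t..T, 1 / a s with hI1def
    set E : ℝ := (Real.exp (-(h*t)) - Real.exp (-(h*T)))/h with hEdef
    have hEeq : ∫ s in t..T, Real.exp (-(h*s)) = E := exp_neg_integral_aux h hh.ne' t T
    have hE0 : 0 ≤ E := by
      have hle : Real.exp (-(h*T)) ≤ Real.exp (-(h*t)) := by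
        apply Real.exp_le_exp.mpr
        nlinarith
      exact div_nonneg (by linarith) hh.le
    -- |I1 - E| ≤ 2ε E
    have hint1 : IntervalIntegrable (fun s => 1 / a s) MeasureTheory.volume t T :=
      h_int t T (lt_of_le_of_lt htT hTmax) hTmax
    have hint2 : IntervalIntegrable (fun s => Real.exp (-(h*s))) MeasureTheory.volume t T :=
      (Real.continuous_exp.comp ((continuous_const.mul continuous_id).neg : Continuous fun s : ℝ => -(h*s))).intervalIntegrable t T
    have hI1E : |I1 - E| ≤ 2*ε * E := by
      rw [← hEeq, hI1def, ← intervalIntegral.integral_sub hint1 hint2]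
      calc |∫ s in t..T, (1 / a s - Real.exp (-(h*s)))|
          ≤ ∫ s in t..T, |1 / a s - Real.exp (-(h*s))| :=
            intervalIntegral.abs_integral_le_integral_abs htT
        _ ≤ ∫ s in t..T, 2*ε * Real.exp (-(h*s)) := by
            apply intervalIntegral.integral_mono_on htT ((hint1.sub hint2).abs)
              (hint2.const_mul (2*ε))
            intro s hs
            exact hpt s hs.2
        _ = 2*ε * ∫ s in t..T, Real.exp (-(h*s)) := intervalIntegral.integral_const_mul _ _
    have h3 : Real.exp (h*t) * Real.exp (-(h*t)) = 1 := by
      rw [← Real.exp_add]; simp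
    have hexpE : Real.exp (h*t) * E = (1 - Real.exp (h*t) * Real.exp (-(h*T)))/h := by
      calc Real.exp (h*t) * E
          = (Real.exp (h*t) * Real.exp (-(h*t)) - Real.exp (h*t) * Real.exp (-(h*T)))/h := by
            rw [hEdef]; ring
        _ = (1 - Real.exp (h*t) * Real.exp (-(h*T)))/h := by rw [h3]
    have hX : 0 < Real.exp (h*t) * Real.exp (-(h*T)) :=
      mul_pos (Real.exp_pos _) (Real.exp_pos _)
    have hexpE_le : Real.exp (h*t) * E ≤ 1/h := by
      rw [hexpE]
      gcongr
      linarith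
    -- assemble
    rw [Real.dist_eq]
    have hdecomp : Real.exp (h*t) * (∫ s in t..tL, 1 / a s) - 1/h =
        Real.exp (h*t) * (I1 - E) + (Real.exp (h*t) * E - 1/h) + Real.exp (h*t) * C := by
      rw [hsplit]; ring
    rw [hdecomp]
    have hb1 : |Real.exp (h*t) * (I1 - E)| ≤ δ/2 := by
      rw [abs_mul, abs_of_pos (Real.exp_pos _)]
      calc Real.exp (h*t) * |I1 - E| ≤ Real.exp (h*t) * (2*ε * E) :=
            mul_le_mul_of_nonneg_left hI1E (Real.exp_pos _).le
        _ = 2*ε * (Real.exp (h*t) * E) := by ring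
        _ ≤ 2*ε * (1/h) := mul_le_mul_of_nonneg_left hexpE_le (by positivity)
        _ ≤ δ/2 := by
            rw [mul_one_div, div_le_iff₀ hh]
            nlinarith
    have hb2 : |Real.exp (h*t) * E - 1/h| + |Real.exp (h*t) * C| < δ/2 := by
      have e1 : |Real.exp (h*t) * E - 1/h| = Real.exp (h*t) * Real.exp (-(h*T))/h := by
        have e0 : Real.exp (h*t) * E - 1/h = -(Real.exp (h*t) * Real.exp (-(h*T))/h) := by
          rw [hexpE]; ring
        rw [e0, abs_neg, abs_of_pos (by positivity)]
      have e2 : |Real.exp (h*t) * C| = Real.exp (h*t) * |C| := by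
        rw [abs_mul, abs_of_pos (Real.exp_pos _)]
      rw [e1, e2]
      calc Real.exp (h*t) * Real.exp (-(h*T))/h + Real.exp (h*t) * |C|
          = Real.exp (h*t) * K := by rw [hKdef]; ring
        _ < δ/2 := hev2t
    calc |Real.exp (h*t) * (I1 - E) + (Real.exp (h*t) * E - 1/h) + Real.exp (h*t) * C|
        ≤ |Real.exp (h*t) * (I1 - E)| + |Real.exp (h*t) * E - 1/h| + |Real.exp (h*t) * C| :=
          (abs_add_le _ _).trans (by gcongr; exact abs_add_le _ _)
      _ < δ/2 + δ/2 := by linarith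
      _ = δ := by ring
  -- ratio limit a t / e^{ht} → 1
  have hratio : Tendsto (fun t => a t / Real.exp (h*t)) atBot (nhds 1) := by
    have h1 := ha_asym.add (tendsto_const_nhds (x := (1:ℝ)))
    rw [zero_add] at h1
    apply h1.congr
    intro t
    field_simp
    ring
  have hfinal := (hratio.mul key).neg
  rw [one_mul] at hfinal
  apply hfinal.congr
  intro t
  have hne := (Real.exp_pos (h*t)).ne'
  field_simp
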